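/- Let n ≥ 2, let A be an n-by-n complex matrix, and let v, w ∈ ℂⁿ be orthonormal eigenvectors of A with Av = λv and Aw = μw. If the k-th entries of v and w are both nonzero (v_k ≠ 0 and w_k ≠ 0), then there exists t ∈ (0, 1) such that (1 − t)λ + tμ belongs to the field of values of the principal submatrix A_{(k)}; i.e., F(A_{(k)}) meets the open segment between λ and μ. -/

import Mathlib

open Matrix Complex

/-- The field of values (numerical range) of a complex matrix:
`F(A) = { x* A x : x* x = 1 }`. -/
def fov {n : ℕ} (A : Matrix (Fin n) (Fin n) ℂ) : Set ℂ :=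
  {z | ∃ x : Fin n → ℂ, star x ⬝ᵥ x = 1 ∧ star x ⬝ᵥ A.mulVec x = z}

/-- The principal submatrix `A_{(k)}` obtained by deleting the `k`-th row and column. -/
def subAt {n : ℕ} (A : Matrix (Fin (n + 1)) (Fin (n + 1)) ℂ) (k : Fin (n + 1)) :
    Matrix (Fin n) (Fin n) ℂ :=
  A.submatrix k.succAbove k.succAbove
/-- If `v, w` are orthonormal eigenvectors of `A` for `λ` and `μ` whose `k`-th entries are
both nonzero, then `F(A_{(k)})` meets the open segment between `λ` and `μ`. -/
theorem fov_deleted_meets_open_segment {n : ℕ} (hn : 1 ≤ n)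
    (A : Matrix (Fin (n + 1)) (Fin (n + 1)) ℂ) (k : Fin (n + 1)) (lam mu : ℂ)
    (v w : Fin (n + 1) → ℂ)
    (hv : star v ⬝ᵥ v = 1) (hw : star w ⬝ᵥ w = 1) (hvw : star v ⬝ᵥ w = 0)
    (heigv : A.mulVec v = lam • v) (heigw : A.mulVec w = mu • w)
    (hvk : v k ≠ 0) (hwk : w k ≠ 0) :
    ∃ t : ℝ, t ∈ Set.Ioo (0 : ℝ) 1 ∧
      ((1 - t : ℝ) : ℂ) * lam + (t : ℂ) * mu ∈ fov (subAt A k) := by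
  classical
  set c : ℂ := w k with hc_def
  set d : ℂ := -(v k) with hd_def
  have hc : c ≠ 0 := hwk
  have hd : d ≠ 0 := neg_ne_zero.mpr hvk
  have hcpos : 0 < Complex.normSq c := Complex.normSq_pos.mpr hc
  have hdpos : 0 < Complex.normSq d := Complex.normSq_pos.mpr hd
  set S : ℝ := Complex.normSq c + Complex.normSq d with hS_def
  have hS : 0 < S := by positivity
  have hsqrt : (0:ℝ) < Real.sqrt S := Real.sqrt_pos.mpr hS
  set s : ℂ := (Real.sqrt S : ℂ) with hs_def
  have hsne : s ≠ 0 := by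
    rw [hs_def]
    exact_mod_cast ne_of_gt hsqrt
  set a : ℂ := c / s with ha_def
  set b : ℂ := d / s with hb_def
  have hnss : Complex.normSq s = S := by
    rw [hs_def, Complex.normSq_ofReal, Real.mul_self_sqrt hS.le]
  have hna : Complex.normSq a = Complex.normSq c / S := by
    rw [ha_def, Complex.normSq_div, hnss]
  have hnb : Complex.normSq b = Complex.normSq d / S := by
    rw [hb_def, Complex.normSq_div, hnss]
  have hsum : Complex.normSq a + Complex.normSq b = 1 := by
    rw [hna, hnb]
    field_simp [hS_def]
    exact hS_def.symm
  have hwv : star w ⬝ᵥ v = 0 := by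
    have h := congrArg (starRingEnd ℂ) hvw
    simp only [dotProduct, map_sum, _root_.map_mul, Complex.conj_conj, map_zero, Pi.star_apply] at h ⊢
    rw [← h]
    apply Finset.sum_congr rfl
    intro i _
    simp [RCLike.star_def, mul_comm]
  set x : Fin (n+1) → ℂ := a • v + b • w with hx_def
  have hxk : x k = 0 := by
    have hcd : c * v k + d * w k = 0 := by rw [hc_def, hd_def]; ring
    have : x k = (c * v k + d * w k) / s := by
      rw [hx_def]
      simp only [Pi.add_apply, Pi.smul_apply, smul_eq_mul, ha_def, hb_def]
      field_simp
    rw [this, hcd, zero_div]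
  have hdot : ∀ (p q : ℂ), star x ⬝ᵥ (p • v + q • w)
      = (starRingEnd ℂ a * p) * (star v ⬝ᵥ v) + (starRingEnd ℂ a * q) * (star v ⬝ᵥ w)
        + (starRingEnd ℂ b * p) * (star w ⬝ᵥ v) + (starRingEnd ℂ b * q) * (star w ⬝ᵥ w) := by
    intro p q
    simp only [hx_def, dotProduct, Pi.add_apply, Pi.smul_apply, Pi.star_apply, smul_eq_mul,
      star_add, star_mul', RCLike.star_def, Finset.sum_add_distrib, Finset.mul_sum]
    rw [← Finset.sum_add_distrib, ← Finset.sum_add_distrib, ← Finset.sum_add_distrib]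
    apply Finset.sum_congr rfl
    intro i _
    ring
  have hfull : star x ⬝ᵥ x = 1 := by
    have h := hdot a b
    rw [hx_def] at h ⊢
    rw [h, hv, hw, hvw, hwv]
    have : starRingEnd ℂ a * a = (Complex.normSq a : ℂ) := by
      rw [mul_comm, Complex.mul_conj]
    have hb' : starRingEnd ℂ b * b = (Complex.normSq b : ℂ) := by
      rw [mul_comm, Complex.mul_conj]
    rw [mul_one, mul_one, mul_zero, mul_zero, this, hb', add_zero, add_zero]
    exact_mod_cast hsum
  have hAx : A.mulVec x = (a * lam) • v + (b * mu) • w := by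
    rw [hx_def, Matrix.mulVec_add, Matrix.mulVec_smul, Matrix.mulVec_smul, heigv, heigw,
      smul_smul, smul_smul, mul_comm a lam, mul_comm b mu]
  have hquad : star x ⬝ᵥ A.mulVec x
      = (Complex.normSq a : ℂ) * lam + (Complex.normSq b : ℂ) * mu := by
    rw [hAx, hdot (a * lam) (b * mu), hv, hw, hvw, hwv]
    rw [mul_one, mul_one, mul_zero, mul_zero, add_zero, add_zero]
    rw [← Complex.mul_conj a, ← Complex.mul_conj b]
    ring
  refine ⟨Complex.normSq b, ⟨?_, ?_⟩, ?_⟩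
  · rw [hnb]; positivity
  · rw [hnb, div_lt_one hS, hS_def]
    linarith
  · refine ⟨fun i => x (k.succAbove i), ?_, ?_⟩
    · have h := Fin.sum_univ_succAbove (fun i => star (x i) * x i) k
      simp only [dotProduct, Pi.star_apply] at hfull ⊢
      rw [hfull] at h
      rw [hxk] at h
      simp only [star_zero, zero_mul, zero_add] at h
      exact h.symm
    · have hmv : ∀ j, (subAt A k).mulVec (fun i => x (k.succAbove i)) j
          = A.mulVec x (k.succAbove j) := by
        intro j
        simp only [subAt, Matrix.mulVec, dotProduct, Matrix.submatrix_apply]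
        rw [Fin.sum_univ_succAbove (fun i => A (k.succAbove j) i * x i) k]
        rw [hxk, mul_zero, zero_add]
      have h2 : star (fun i => x (k.succAbove i)) ⬝ᵥ
          (subAt A k).mulVec (fun i => x (k.succAbove i))
          = star x ⬝ᵥ A.mulVec x := by
        simp only [dotProduct, Pi.star_apply]
        rw [Fin.sum_univ_succAbove (fun i => star (x i) * A.mulVec x i) k]
        rw [hxk]
        simp only [star_zero, zero_mul, zero_add]
        apply Finset.sum_congr rfl
        intro i _
        rw [hmv i]
      have hca : (Complex.normSq a : ℂ) = 1 - (Complex.normSq b : ℂ) := by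
        norm_cast; linarith
      rw [h2, hquad, hca]
      push_cast
      ring
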